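/- Let Γ₁,…,Γ_K (K ≥ 1) be d×d complex matrices that are Hermitian, unitary, and pairwise anticommuting, and let U₁,…,U_K be D×D Hermitian unitary matrices that pairwise commute (UᵢUⱼ = UⱼUᵢ for all i, j). Then ‖W_K(U₁,…,U_K)‖ ≤ K + 2√K, where W_K(U₁,…,U_K) := ∑_{k=1}^K ( Γₖ ⊗ (Uₖ ⊗ I_D + I_D ⊗ Uₖ) + I_d ⊗ Uₖ ⊗ Uₖ ). -/

import Mathlib

open Matrix
open scoped Matrix.Norms.L2Operator Kronecker

/-- The game operator `W_K(U₁,…,U_K) = ∑ₖ (Γₖ ⊗ (Uₖ ⊗ I_D + I_D ⊗ Uₖ) + I_d ⊗ Uₖ ⊗ Uₖ)`. -/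
noncomputable def WK {K d D : ℕ} (Γ : Fin K → Matrix (Fin d) (Fin d) ℂ)
    (U : Fin K → Matrix (Fin D) (Fin D) ℂ) :
    Matrix (Fin d × (Fin D × Fin D)) (Fin d × (Fin D × Fin D)) ℂ :=
  ∑ k, (Γ k ⊗ₖ (U k ⊗ₖ (1 : Matrix (Fin D) (Fin D) ℂ)
          + (1 : Matrix (Fin D) (Fin D) ℂ) ⊗ₖ U k)
        + (1 : Matrix (Fin d) (Fin d) ℂ) ⊗ₖ (U k ⊗ₖ U k))

private lemma kron_conjT {m n p q : Type*} (A : Matrix m n ℂ) (B : Matrix p q ℂ) :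
    (A ⊗ₖ B)ᴴ = Aᴴ ⊗ₖ Bᴴ := by
  ext ⟨i,j⟩ ⟨k,l⟩
  simp [conjTranspose_apply, kroneckerMap_apply, mul_comm]

private lemma norm_le_one_of_unitary {n : Type*} [Fintype n] [DecidableEq n]
    (A : Matrix n n ℂ) (h : Aᴴ * A = 1) : ‖A‖ ≤ 1 := by
  have h2 : ‖A‖ * ‖A‖ ≤ 1 := by
    rw [← Matrix.l2_opNorm_conjTranspose_mul_self, h, cstar_norm_def, _root_.map_one]
    exact ContinuousLinearMap.norm_id_le
  nlinarith [norm_nonneg A]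

/-- For a Clifford family `Γ₁, …, Γ_K` (Hermitian, unitary, pairwise
anticommuting `d × d` matrices) and pairwise commuting `D × D` Hermitian unitaries
`U₁, …, U_K`, one has `‖W_K(U₁,…,U_K)‖ ≤ K + 2√K`. -/
theorem stmt6 (K d D : ℕ) (hK : 1 ≤ K)
    (Γ : Fin K → Matrix (Fin d) (Fin d) ℂ)
    (hherm : ∀ k, (Γ k).IsHermitian)
    (hunit : ∀ k, Γ k * Γ k = 1)
    (hanti : ∀ i j, i ≠ j → Γ i * Γ j + Γ j * Γ i = 0)
    (U : Fin K → Matrix (Fin D) (Fin D) ℂ)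
    (hUherm : ∀ k, (U k).IsHermitian)
    (hUunit : ∀ k, U k * U k = 1)
    (hUcomm : ∀ i j, U i * U j = U j * U i) :
    ‖WK Γ U‖ ≤ K + 2 * Real.sqrt K := by
  set M : Fin K → Matrix (Fin D × Fin D) (Fin D × Fin D) ℂ :=
    fun k => U k ⊗ₖ (1 : Matrix (Fin D) (Fin D) ℂ)
      + (1 : Matrix (Fin D) (Fin D) ℂ) ⊗ₖ U k with hM
  set A : Matrix (Fin d × (Fin D × Fin D)) (Fin d × (Fin D × Fin D)) ℂ :=
    ∑ k, Γ k ⊗ₖ M k with hA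
  set B : Matrix (Fin d × (Fin D × Fin D)) (Fin d × (Fin D × Fin D)) ℂ :=
    ∑ k, (1 : Matrix (Fin d) (Fin d) ℂ) ⊗ₖ (U k ⊗ₖ U k) with hB
  have hW : WK Γ U = A + B := by
    rw [WK, hA, hB, ← Finset.sum_add_distrib]
  -- each U k ⊗ₖ 1 etc is unitary
  have hMherm : ∀ k, (M k)ᴴ = M k := by
    intro k
    simp [hM, conjTranspose_add, kron_conjT, (hUherm k).eq, conjTranspose_one]
  -- Hermitian-ness of A
  have hAherm : Aᴴ = A := by
    rw [hA, conjTranspose_sum]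
    refine Finset.sum_congr rfl fun k _ => ?_
    rw [kron_conjT, hMherm, (hherm k).eq]
  -- commuting M's
  have hMcomm : ∀ j k, M j * M k = M k * M j := by
    intro j k
    simp only [hM, add_mul, mul_add, ← mul_kronecker_mul, one_mul, mul_one, hUcomm j k]
    abel
  -- A * A = ∑ k, 1 ⊗ₖ (M k * M k)
  have hAA : A * A = ∑ k, (1 : Matrix (Fin d) (Fin d) ℂ) ⊗ₖ (M k * M k) := by
    rw [hA, Finset.sum_mul_sum]
    have key : ∀ j k : Fin K, (Γ j ⊗ₖ M j) * (Γ k ⊗ₖ M k) = (Γ j * Γ k) ⊗ₖ (M j * M k) :=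
      fun j k => (mul_kronecker_mul _ _ _ _).symm
    simp only [key]
    have hswap : (∑ j : Fin K, ∑ k : Fin K, (Γ j * Γ k) ⊗ₖ (M j * M k))
        = ∑ j : Fin K, ∑ k : Fin K, (Γ k * Γ j) ⊗ₖ (M k * M j) := Finset.sum_comm
    have h2 : (∑ j : Fin K, ∑ k : Fin K, (Γ j * Γ k) ⊗ₖ (M j * M k))
        + (∑ j : Fin K, ∑ k : Fin K, (Γ j * Γ k) ⊗ₖ (M j * M k))
        = (∑ k, (1 : Matrix (Fin d) (Fin d) ℂ) ⊗ₖ (M k * M k))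
          + ∑ k, (1 : Matrix (Fin d) (Fin d) ℂ) ⊗ₖ (M k * M k) := by
      nth_rewrite 2 [hswap]
      simp only [← Finset.sum_add_distrib]
      calc ∑ j : Fin K, ∑ k : Fin K, ((Γ j * Γ k) ⊗ₖ (M j * M k) + (Γ k * Γ j) ⊗ₖ (M k * M j))
          = ∑ j : Fin K, ∑ k : Fin K, (if j = k then
              (1 : Matrix (Fin d) (Fin d) ℂ) ⊗ₖ (M k * M k)
                + (1 : Matrix (Fin d) (Fin d) ℂ) ⊗ₖ (M k * M k) else 0) := by
            refine Finset.sum_congr rfl fun j _ => ?_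
            refine Finset.sum_congr rfl fun k _ => ?_
            by_cases hjk : j = k
            · subst hjk
              simp [hunit j]
            · rw [if_neg hjk, ← hMcomm j k, ← add_kronecker, hanti j k hjk, zero_kronecker]
        _ = _ := by
            refine Finset.sum_congr rfl fun j _ => ?_
            rw [Finset.sum_ite_eq (Finset.univ) j
              (fun k => (1 : Matrix (Fin d) (Fin d) ℂ) ⊗ₖ (M k * M k)
                + (1 : Matrix (Fin d) (Fin d) ℂ) ⊗ₖ (M k * M k))]
            simp
    have h3 : (2 : ℂ) • (∑ j : Fin K, ∑ k : Fin K, (Γ j * Γ k) ⊗ₖ (M j * M k))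
        = (2 : ℂ) • ∑ k, (1 : Matrix (Fin d) (Fin d) ℂ) ⊗ₖ (M k * M k) := by
      rw [two_smul, two_smul]; exact h2
    exact smul_right_injective _ (two_ne_zero) h3
  -- norm bounds
  have hnormB : ‖B‖ ≤ (K : ℝ) := by
    rw [hB]
    calc ‖∑ k, (1 : Matrix (Fin d) (Fin d) ℂ) ⊗ₖ (U k ⊗ₖ U k)‖
        ≤ ∑ k : Fin K, ‖(1 : Matrix (Fin d) (Fin d) ℂ) ⊗ₖ (U k ⊗ₖ U k)‖ :=
          norm_sum_le _ _
      _ ≤ ∑ k : Fin K, (1 : ℝ) := by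
          refine Finset.sum_le_sum fun k _ => norm_le_one_of_unitary _ ?_
          rw [kron_conjT, kron_conjT, conjTranspose_one, (hUherm k).eq,
            ← mul_kronecker_mul, ← mul_kronecker_mul, one_mul, hUunit k, one_kronecker_one,
            one_kronecker_one]
      _ = (K : ℝ) := by simp
  have hMk_norm : ∀ k, ‖(1 : Matrix (Fin d) (Fin d) ℂ) ⊗ₖ M k‖ ≤ 2 := by
    intro k
    have : (1 : Matrix (Fin d) (Fin d) ℂ) ⊗ₖ M k
        = (1 : Matrix (Fin d) (Fin d) ℂ) ⊗ₖ (U k ⊗ₖ (1 : Matrix (Fin D) (Fin D) ℂ))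
          + (1 : Matrix (Fin d) (Fin d) ℂ) ⊗ₖ ((1 : Matrix (Fin D) (Fin D) ℂ) ⊗ₖ U k) := by
      rw [hM, kronecker_add]
    rw [this]
    have h1 : ‖(1 : Matrix (Fin d) (Fin d) ℂ) ⊗ₖ (U k ⊗ₖ (1 : Matrix (Fin D) (Fin D) ℂ))‖ ≤ 1 := by
      refine norm_le_one_of_unitary _ ?_
      rw [kron_conjT, kron_conjT, conjTranspose_one, conjTranspose_one, (hUherm k).eq,
        ← mul_kronecker_mul, ← mul_kronecker_mul, one_mul, one_mul, hUunit k, one_kronecker_one,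
        one_kronecker_one]
    have h2 : ‖(1 : Matrix (Fin d) (Fin d) ℂ) ⊗ₖ ((1 : Matrix (Fin D) (Fin D) ℂ) ⊗ₖ U k)‖ ≤ 1 := by
      refine norm_le_one_of_unitary _ ?_
      rw [kron_conjT, kron_conjT, conjTranspose_one, conjTranspose_one, (hUherm k).eq,
        ← mul_kronecker_mul, ← mul_kronecker_mul, one_mul, one_mul, hUunit k, one_kronecker_one,
        one_kronecker_one]
    calc _ ≤ _ + _ := norm_add_le _ _
      _ ≤ (1 : ℝ) + 1 := add_le_add h1 h2
      _ = 2 := by norm_num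
  have hnormAA : ‖A * A‖ ≤ 4 * K := by
    rw [hAA]
    calc ‖∑ k, (1 : Matrix (Fin d) (Fin d) ℂ) ⊗ₖ (M k * M k)‖
        ≤ ∑ k : Fin K, ‖(1 : Matrix (Fin d) (Fin d) ℂ) ⊗ₖ (M k * M k)‖ := norm_sum_le _ _
      _ ≤ ∑ k : Fin K, (4 : ℝ) := by
          refine Finset.sum_le_sum fun k _ => ?_
          have : (1 : Matrix (Fin d) (Fin d) ℂ) ⊗ₖ (M k * M k)
              = ((1 : Matrix (Fin d) (Fin d) ℂ) ⊗ₖ M k) * ((1 : Matrix (Fin d) (Fin d) ℂ) ⊗ₖ M k) := by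
            rw [← mul_kronecker_mul, one_mul]
          rw [this]
          calc ‖_ * _‖ ≤ ‖(1 : Matrix (Fin d) (Fin d) ℂ) ⊗ₖ M k‖ * ‖(1 : Matrix (Fin d) (Fin d) ℂ) ⊗ₖ M k‖ :=
                Matrix.l2_opNorm_mul _ _
            _ ≤ 2 * 2 := mul_le_mul (hMk_norm k) (hMk_norm k) (norm_nonneg _) (by norm_num)
            _ = 4 := by norm_num
      _ = 4 * K := by simp [mul_comm]
  have hnormA : ‖A‖ ≤ 2 * Real.sqrt K := by
    have hsq : ‖A‖ * ‖A‖ ≤ 4 * K := by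
      rw [← Matrix.l2_opNorm_conjTranspose_mul_self, hAherm]
      exact hnormAA
    have h4 : (2 * Real.sqrt K) * (2 * Real.sqrt K) = 4 * K := by
      have := Real.sq_sqrt (by positivity : (0:ℝ) ≤ (K:ℝ))
      nlinarith [this]
    nlinarith [norm_nonneg A, Real.sqrt_nonneg (K:ℝ), hsq]
  calc ‖WK Γ U‖ = ‖A + B‖ := by rw [hW]
    _ ≤ ‖A‖ + ‖B‖ := norm_add_le _ _
    _ ≤ 2 * Real.sqrt K + K := add_le_add hnormA hnormB
    _ = K + 2 * Real.sqrt K := by ring
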